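/- Let C be a coassociative coalgebra over a field k of characteristic zero with a symmetric bilinear pairing ⟨-,-⟩ satisfying the cyclicity condition ⟨v',w⟩·v'' = ⟨v,w''⟩·w' for all v,w ∈ C (in Sweedler notation). On the tensor algebra T(C), define the bracket {{v,w}} on generators v=(v₁,...,vₙ), w=(w₁,...,wₘ) by {{v,w}} = Σᵢⱼ ⟨vᵢ,wⱼ⟩·(w₁,...,wⱼ₋₁,vᵢ₊₁,...,vₙ) ⊗ (v₁,...,vᵢ₋₁,wⱼ₊₁,...,wₘ). Then {{-,-}} is a derivation in its second argument for the outer bimodule structure: {{u, v·w}} = {{u,v}}' ⊗ {{u,v}}''·w + v·{{u,w}}' ⊗ {{u,w}}'' (up to sign in the graded case). -/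

import Mathlib

open scoped TensorProduct

/-- Contraction in the first tensor factor: `x ⊗ y ↦ ⟨x, w⟩ • y`. -/
noncomputable def contractL (k C : Type) [Field k] [AddCommGroup C] [Module k C]
    (β : C →ₗ[k] C →ₗ[k] k) (w : C) : C ⊗[k] C →ₗ[k] C :=
  (TensorProduct.lid k C).toLinearMap ∘ₗ LinearMap.rTensor C (β.flip w)

/-- Contraction in the second tensor factor: `x ⊗ y ↦ ⟨v, y⟩ • x`. -/
noncomputable def contractR (k C : Type) [Field k] [AddCommGroup C] [Module k C]
    (β : C →ₗ[k] C →ₗ[k] k) (v : C) : C ⊗[k] C →ₗ[k] C :=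
  (TensorProduct.rid k C).toLinearMap ∘ₗ LinearMap.lTensor C (β v)

/-- The product `(v₁, …, vₙ) = ι v₁ ⋯ ι vₙ` of a tuple of generators in the tensor algebra. -/
noncomputable def listProd (k C : Type) [Field k] [AddCommGroup C] [Module k C]
    (l : List C) : TensorAlgebra k C :=
  (l.map (TensorAlgebra.ι k)).prod

section Aux

variable (k C : Type) [Field k] [AddCommGroup C] [Module k C]

lemma listProd_append (l m : List C) :
    listProd k C (l ++ m) = listProd k C l * listProd k C m := by
  simp [listProd]

lemma listProd_span :
    Submodule.span k (Set.range (listProd k C)) = ⊤ := by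
  rw [eq_top_iff]
  rintro x -
  induction x using TensorAlgebra.induction with
  | algebraMap r =>
      have : (algebraMap k (TensorAlgebra k C)) r = r • listProd k C [] := by
        simp [listProd, Algebra.algebraMap_eq_smul_one]
      rw [this]
      exact Submodule.smul_mem _ _ (Submodule.subset_span ⟨[], rfl⟩)
  | ι x =>
      have : TensorAlgebra.ι k x = listProd k C [x] := by simp [listProd]
      rw [this]
      exact Submodule.subset_span ⟨[x], rfl⟩
  | mul a b ha hb =>
      induction ha using Submodule.span_induction with
      | mem x hx =>
          induction hb using Submodule.span_induction with
          | mem y hy =>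
              obtain ⟨lx, rfl⟩ := hx
              obtain ⟨ly, rfl⟩ := hy
              rw [← listProd_append]
              exact Submodule.subset_span ⟨lx ++ ly, rfl⟩
          | zero => rw [mul_zero]; exact Submodule.zero_mem _
          | add y z _ _ hy hz => rw [mul_add]; exact Submodule.add_mem _ hy hz
          | smul c y _ hy => rw [mul_smul_comm]; exact Submodule.smul_mem _ _ hy
      | zero => rw [zero_mul]; exact Submodule.zero_mem _
      | add x y _ _ hx hy => rw [add_mul]; exact Submodule.add_mem _ hx hy
      | smul c x _ hx => rw [smul_mul_assoc]; exact Submodule.smul_mem _ _ hx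
  | add a b ha hb => exact Submodule.add_mem _ ha hb

variable (β : C →ₗ[k] C →ₗ[k] k)
    (DB : TensorAlgebra k C →ₗ[k] TensorAlgebra k C →ₗ[k]
        TensorAlgebra k C ⊗[k] TensorAlgebra k C)

lemma key_lemma
    (hDB : ∀ l m : List C,
      DB (listProd k C l) (listProd k C m) =
        ∑ i : Fin l.length, ∑ j : Fin m.length,
          β (l.get i) (m.get j) •
            (listProd k C (m.take (j : ℕ) ++ l.drop ((i : ℕ) + 1)) ⊗ₜ[k]
              listProd k C (l.take (i : ℕ) ++ m.drop ((j : ℕ) + 1))))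
    (l m n : List C) :
    DB (listProd k C l) (listProd k C m * listProd k C n) =
      DB (listProd k C l) (listProd k C m) * ((1 : TensorAlgebra k C) ⊗ₜ[k] listProd k C n) +
        (listProd k C m ⊗ₜ[k] (1 : TensorAlgebra k C)) * DB (listProd k C l) (listProd k C n) := by
  rw [← listProd_append, hDB, hDB, hDB, Finset.sum_mul, Finset.mul_sum,
    ← Finset.sum_add_distrib]
  refine Finset.sum_congr rfl fun i _ => ?_
  rw [Finset.sum_mul, Finset.mul_sum]
  -- abbreviate the ℕ-indexed summand on the left
  set F : ℕ → TensorAlgebra k C ⊗[k] TensorAlgebra k C := fun j =>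
    β (l.get i) ((m ++ n).getD j 0) •
      (listProd k C ((m ++ n).take j ++ l.drop ((i : ℕ) + 1)) ⊗ₜ[k]
        listProd k C (l.take (i : ℕ) ++ (m ++ n).drop (j + 1))) with hF
  have e1 : (∑ j : Fin (m ++ n).length,
      β (l.get i) ((m ++ n).get j) •
        (listProd k C ((m ++ n).take (j : ℕ) ++ l.drop ((i : ℕ) + 1)) ⊗ₜ[k]
          listProd k C (l.take (i : ℕ) ++ (m ++ n).drop ((j : ℕ) + 1)))) =
      ∑ j ∈ Finset.range (m.length + n.length), F j := by
    rw [← List.length_append, ← Fin.sum_univ_eq_sum_range]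
    refine Finset.sum_congr rfl fun j _ => ?_
    rw [hF]
    simp only [List.get_eq_getElem, List.getD_eq_getElem _ _ j.isLt]
  rw [e1, Finset.sum_range_add]
  congr 1
  · rw [← Fin.sum_univ_eq_sum_range]
    refine Finset.sum_congr rfl fun j _ => ?_
    have hj : (j : ℕ) < m.length := j.isLt
    rw [hF]
    simp only [List.getD_append _ _ _ _ hj, List.getD_eq_getElem _ _ hj,
      List.take_append_of_le_length hj.le, List.drop_append_of_le_length hj,
      ← List.append_assoc, listProd_append, List.get_eq_getElem,
      smul_mul_assoc, Algebra.TensorProduct.tmul_mul_tmul, mul_one]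
  · rw [← Fin.sum_univ_eq_sum_range]
    refine Finset.sum_congr rfl fun j _ => ?_
    have h1 : m.length ≤ m.length + (j : ℕ) := Nat.le_add_right _ _
    have h2 : m.length + (j : ℕ) + 1 = m.length + ((j : ℕ) + 1) := by omega
    have h3 : (m ++ n).getD (m.length + (j : ℕ)) 0 = n.getD (j : ℕ) 0 := by
      rw [List.getD_append_right _ _ _ _ h1, Nat.add_sub_cancel_left]
    rw [hF]
    simp only []
    rw [h3, List.take_length_add_append, h2, List.drop_length_add_append, List.append_assoc, listProd_append,
      List.getD_eq_getElem _ _ j.isLt]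
    simp only [List.get_eq_getElem, mul_smul_comm, Algebra.TensorProduct.tmul_mul_tmul, one_mul]

end Aux

/-- Let `C` be a coassociative coalgebra over a field `k` of characteristic zero
with a symmetric bilinear pairing satisfying the cyclicity condition
`⟨v',w⟩·v'' = ⟨v,w''⟩·w'`.  On the tensor algebra `T(C)` define the bracket `{{v,w}}` on
generators `v = (v₁,…,vₙ)`, `w = (w₁,…,wₘ)` by
`{{v,w}} = Σᵢⱼ ⟨vᵢ,wⱼ⟩ · (w₁,…,wⱼ₋₁,vᵢ₊₁,…,vₙ) ⊗ (v₁,…,vᵢ₋₁,wⱼ₊₁,…,wₘ)`.  Then `{{-,-}}` is a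
derivation in its second argument for the outer bimodule structure:
`{{u, v·w}} = {{u,v}}' ⊗ {{u,v}}''·w + v·{{u,w}}' ⊗ {{u,w}}''` (ungraded case, all signs `+1`). -/
theorem stmt6 (k C : Type) [Field k] [CharZero k] [AddCommGroup C] [Module k C]
    (Δ : C →ₗ[k] C ⊗[k] C)
    (hcoassoc : (TensorProduct.assoc k C C C).toLinearMap ∘ₗ
        LinearMap.rTensor C Δ ∘ₗ Δ = LinearMap.lTensor C Δ ∘ₗ Δ)
    (β : C →ₗ[k] C →ₗ[k] k)
    (hsym : ∀ v w : C, β v w = β w v)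
    (hcyc : ∀ v w : C, contractL k C β w (Δ v) = contractR k C β v (Δ w))
    (DB : TensorAlgebra k C →ₗ[k] TensorAlgebra k C →ₗ[k]
        TensorAlgebra k C ⊗[k] TensorAlgebra k C)
    (hDB : ∀ l m : List C,
      DB (listProd k C l) (listProd k C m) =
        ∑ i : Fin l.length, ∑ j : Fin m.length,
          β (l.get i) (m.get j) •
            (listProd k C (m.take (j : ℕ) ++ l.drop ((i : ℕ) + 1)) ⊗ₜ[k]
              listProd k C (l.take (i : ℕ) ++ m.drop ((j : ℕ) + 1)))) :
    ∀ u v w : TensorAlgebra k C,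
      DB u (v * w) =
        DB u v * ((1 : TensorAlgebra k C) ⊗ₜ[k] w) +
          (v ⊗ₜ[k] (1 : TensorAlgebra k C)) * DB u w := by
  intro u v w
  have hu : u ∈ Submodule.span k (Set.range (listProd k C)) := by
    rw [listProd_span]; trivial
  have hv : v ∈ Submodule.span k (Set.range (listProd k C)) := by
    rw [listProd_span]; trivial
  have hw : w ∈ Submodule.span k (Set.range (listProd k C)) := by
    rw [listProd_span]; trivial
  induction hu using Submodule.span_induction with
  | mem a ha =>
      induction hv using Submodule.span_induction with
      | mem b hb =>
          induction hw using Submodule.span_induction with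
          | mem c hc =>
              obtain ⟨la, rfl⟩ := ha
              obtain ⟨lb, rfl⟩ := hb
              obtain ⟨lc, rfl⟩ := hc
              exact key_lemma k C β DB hDB la lb lc
          | zero => simp
          | add x y _ _ hx hy =>
              rw [mul_add, map_add, hx, hy, map_add, TensorProduct.tmul_add]
              simp only [mul_add, add_mul]
              abel
          | smul c x _ hx =>
              rw [mul_smul_comm, map_smul, hx, map_smul, TensorProduct.tmul_smul]
              simp [smul_add, mul_smul_comm, smul_mul_assoc]
      | zero => simp
      | add x y _ _ hx hy =>
          rw [add_mul, map_add, hx, hy, map_add, TensorProduct.add_tmul]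
          simp only [mul_add, add_mul]
          abel
      | smul c x _ hx =>
          have h1 : (c • x) ⊗ₜ[k] (1 : TensorAlgebra k C) = c • (x ⊗ₜ[k] 1) :=
            (TensorProduct.smul_tmul' c x 1).symm
          rw [smul_mul_assoc, map_smul, hx, map_smul, h1]
          simp [smul_add, smul_mul_assoc]
  | zero => simp
  | add x y _ _ hx hy =>
      rw [map_add, LinearMap.add_apply, hx, hy, LinearMap.add_apply, LinearMap.add_apply]
      simp only [mul_add, add_mul]
      abel
  | smul c x _ hx =>
      rw [map_smul, LinearMap.smul_apply, hx, LinearMap.smul_apply, LinearMap.smul_apply]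
      simp [smul_add, smul_mul_assoc, mul_smul_comm]
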